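/- Under the mixture setup, for any δ ∈ (1/2, 1] one has P(max_{1 ≤ i < j ≤ n} |X_i − X_j| ≥ δ) = 2 · P( {max_{1 ≤ i < j ≤ n} |X̃_i − X̃_j| ≥ δ} ∩ Ã ). -/
import Mathlib


open MeasureTheory

noncomputable section

lemma measurable_abs_sub {α : Type*} {m : MeasurableSpace α} {f g : α → ℝ}
    (hf : Measurable[m] f) (hg : Measurable[m] g) :
    Measurable[m] fun ω => |f ω - g ω| := (hf.sub hg).abs

/-- The event that some pair of the variables differ by at least `δ`. -/
def maxEvent {Ω : Type} {n : ℕ} (X : Fin n → Ω → ℝ) (δ : ℝ) : Set Ω :=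
  {ω | ∃ i j : Fin n, i < j ∧ δ ≤ |X i ω - X j ω|}

theorem mixture_prob_identity {Ω : Type} [mΩ : MeasurableSpace Ω] (P : Measure Ω)
    [IsProbabilityMeasure P] (n M : ℕ) (hM : 1 ≤ M)
    (A : Set Ω) (hA : MeasurableSet A)
    (G : Fin n → MeasurableSpace Ω) (hG : ∀ i, G i ≤ mΩ)
    (X : Fin n → Ω → ℝ)
    (hX : ∀ i, X i =ᵐ[P] P[A.indicator (fun _ => (1 : ℝ)) | G i])
    (hXfin : ∀ i, ∃ s : Finset ℝ, s.card ≤ M ∧ ∀ᵐ ω ∂P, X i ω ∈ s)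
    (U : Ω → ℝ) (hU : Measurable U)
    (hU0 : P {ω | U ω = 0} = 1 / 2) (hU1 : P {ω | U ω = 1} = 1 / 2)
    (hindep : ProbabilityTheory.Indep (MeasurableSpace.comap U inferInstance)
      ((⨆ i, G i) ⊔ MeasurableSpace.generateFrom {A}) P)
    (Xt : Fin n → Ω → ℝ)
    (hXt : Xt = fun i ω => U ω * X i ω + (1 - U ω) * (1 - X i ω))
    (At : Set Ω) (hAt : At = (A ∩ {ω | U ω = 1}) ∪ (Aᶜ ∩ {ω | U ω = 0}))
    (Gt : Fin n → MeasurableSpace Ω)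
    (hGt : Gt = fun i => G i ⊔ MeasurableSpace.comap U inferInstance) :
    ∀ δ ∈ Set.Ioc (1 / 2 : ℝ) 1,
      (P (maxEvent X δ)).toReal = 2 * (P (maxEvent Xt δ ∩ At)).toReal := by
  intro δ hδ
  set Y : Fin n → Ω → ℝ := fun i => P[A.indicator (fun _ => (1 : ℝ)) | G i] with hY
  -- Y i is measurable w.r.t. ⨆ i, G i
  have hYmeas : ∀ i, Measurable[⨆ i, G i] (Y i) := fun i =>
    ((stronglyMeasurable_condExp (m := G i)).measurable).mono (le_iSup G i) le_rfl
  -- measurability of maxEvent Y δ w.r.t. ⨆ G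
  have hEdecomp : maxEvent Y δ =
      ⋃ i, ⋃ j, {ω | i < j ∧ δ ≤ |Y i ω - Y j ω|} := by
    ext ω; simp [maxEvent]
  have hEmeas' : MeasurableSet[⨆ i, G i] (maxEvent Y δ) := by
    rw [hEdecomp]
    refine MeasurableSet.iUnion fun i => MeasurableSet.iUnion fun j => ?_
    by_cases hij : i < j
    · have : {ω | i < j ∧ δ ≤ |Y i ω - Y j ω|} = (fun ω => |Y i ω - Y j ω|) ⁻¹' Set.Ici δ := by
        ext ω; simp [hij]
      rw [this]
      exact measurable_abs_sub (hYmeas i) (hYmeas j) measurableSet_Ici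
    · have : {ω | i < j ∧ δ ≤ |Y i ω - Y j ω|} = ∅ := by
        ext ω; simp [hij]
      rw [this]; exact @MeasurableSet.empty _ (⨆ i, G i)
  have hGsup : (⨆ i, G i) ≤ mΩ := iSup_le hG
  have hEmeas : MeasurableSet (maxEvent Y δ) := hGsup _ hEmeas'
  -- a.e. equality of X i with Y i, jointly
  have hXY : ∀ᵐ ω ∂P, ∀ i, X i ω = Y i ω := by
    rw [MeasureTheory.ae_all_iff]; exact hX
  -- maxEvent X δ =ᵐ maxEvent Y δ
  have hXE : maxEvent X δ =ᵐ[P] maxEvent Y δ := by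
    rw [Filter.eventuallyEq_set]
    filter_upwards [hXY] with ω hω
    simp only [maxEvent, Set.mem_setOf_eq, hω]
  -- On At, |Xt i - Xt j| = |X i - X j|
  have hAtU : ∀ ω ∈ At, U ω = 1 ∨ U ω = 0 := by
    intro ω hω
    rw [hAt] at hω
    rcases hω with h | h
    · exact Or.inl h.2
    · exact Or.inr h.2
  have hXtabs : ∀ ω ∈ At, ∀ i j, |Xt i ω - Xt j ω| = |X i ω - X j ω| := by
    intro ω hω i j
    rcases hAtU ω hω with h | h <;> rw [hXt] <;> simp only [h] <;> ring_nf
    rw [show -X i ω + X j ω = -(X i ω - X j ω) by ring, abs_neg]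
  have hXtAt : maxEvent Xt δ ∩ At = maxEvent X δ ∩ At := by
    ext ω
    simp only [Set.mem_inter_iff, maxEvent, Set.mem_setOf_eq]
    constructor
    · rintro ⟨⟨i, j, hij, habs⟩, hω⟩
      exact ⟨⟨i, j, hij, by rwa [hXtabs ω hω i j] at habs⟩, hω⟩
    · rintro ⟨⟨i, j, hij, habs⟩, hω⟩
      exact ⟨⟨i, j, hij, by rwa [hXtabs ω hω i j]⟩, hω⟩
  -- measurability of At
  have hU1m : MeasurableSet {ω | U ω = 1} := hU (measurableSet_singleton 1)
  have hU0m : MeasurableSet {ω | U ω = 0} := hU (measurableSet_singleton 0)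
  have hAtm : MeasurableSet At := by
    rw [hAt]
    exact (hA.inter hU1m).union (hA.compl.inter hU0m)
  -- use independence to compute P(E ∩ At)
  have hind := (ProbabilityTheory.Indep_iff _ _ _).mp hindep
  have hUcomap : ∀ c : ℝ, MeasurableSet[MeasurableSpace.comap U inferInstance] {ω | U ω = c} :=
    fun c => ⟨{c}, measurableSet_singleton c, rfl⟩
  have hm2 : MeasurableSpace.generateFrom {A} ≤ (⨆ i, G i) ⊔ MeasurableSpace.generateFrom {A} :=
    le_sup_right
  have hAm2 : MeasurableSet[(⨆ i, G i) ⊔ MeasurableSpace.generateFrom {A}] A :=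
    hm2 _ (MeasurableSpace.measurableSet_generateFrom rfl)
  have hEm2 : MeasurableSet[(⨆ i, G i) ⊔ MeasurableSpace.generateFrom {A}] (maxEvent Y δ) :=
    le_sup_left (α := MeasurableSpace Ω) _ hEmeas'
  have h1 : P ({ω | U ω = 1} ∩ (maxEvent Y δ ∩ A)) = 1/2 * P (maxEvent Y δ ∩ A) := by
    rw [hind _ _ (hUcomap 1) (hEm2.inter hAm2), hU1]
  have h0 : P ({ω | U ω = 0} ∩ (maxEvent Y δ ∩ Aᶜ)) = 1/2 * P (maxEvent Y δ ∩ Aᶜ) := by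
    rw [hind _ _ (hUcomap 0) (hEm2.inter hAm2.compl), hU0]
  -- decompose E ∩ At
  have hdecomp : maxEvent Y δ ∩ At =
      ({ω | U ω = 1} ∩ (maxEvent Y δ ∩ A)) ∪ ({ω | U ω = 0} ∩ (maxEvent Y δ ∩ Aᶜ)) := by
    rw [hAt]; ext ω
    simp only [Set.mem_inter_iff, Set.mem_union, Set.mem_setOf_eq, Set.mem_compl_iff]
    tauto
  have hdisj : Disjoint ({ω | U ω = 1} ∩ (maxEvent Y δ ∩ A))
      ({ω | U ω = 0} ∩ (maxEvent Y δ ∩ Aᶜ)) := by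
    rw [Set.disjoint_left]
    rintro ω ⟨-, -, hA1⟩ ⟨-, -, hA2⟩
    exact hA2 hA1
  have hmeas1 : MeasurableSet ({ω | U ω = 0} ∩ (maxEvent Y δ ∩ Aᶜ)) :=
    hU0m.inter (hEmeas.inter hA.compl)
  have hPEAt : P (maxEvent Y δ ∩ At) = 1/2 * P (maxEvent Y δ) := by
    rw [hdecomp, measure_union hdisj hmeas1, h1, h0, ← mul_add]
    congr 1
    rw [← measure_inter_add_diff (maxEvent Y δ) hA, Set.diff_eq]
  -- transfer a.e. equalities
  have hae1 : P (maxEvent X δ) = P (maxEvent Y δ) := measure_congr hXE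
  have hae2 : P (maxEvent Xt δ ∩ At) = P (maxEvent Y δ ∩ At) := by
    rw [hXtAt]
    exact measure_congr (Filter.EventuallyEq.inter hXE (Filter.EventuallyEq.rfl))
  rw [hae1, hae2, hPEAt]
  have hfin : P (maxEvent Y δ) ≠ ⊤ := measure_ne_top P _
  rw [ENNReal.toReal_mul]
  norm_num
  ring
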